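/- arXiv:0901.3471 — 3 statements merged into one kernel-verified Lean document; each statement's English description precedes it below -/
import Mathlib

section
/- Let h be a continuous function on [a,b] and T(h) its least concave majorant, with left derivative T(h)'. Then the support of the Stieltjes measure dT(h)' (the measure induced by the monotone non-increasing function T(h)') is contained in the closed set {t ∈ [a,b] : T(h)(t) = h(t)}. -/
open Set MeasureTheory

set_option maxHeartbeats 1000000

/-- Least concave majorant of `h` on `[a,b]`. -/
noncomputable def lcm (a b : ℝ) (h : ℝ → ℝ) (t : ℝ) : ℝ :=
  sInf {y : ℝ | ∃ z : ℝ → ℝ, ConcaveOn ℝ (Icc a b) z ∧ (∀ x ∈ Icc a b, h x ≤ z x) ∧ y = z t}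

namespace LcmAux

variable {a b t : ℝ} {h : ℝ → ℝ}

lemma S_nonempty (hcont : ContinuousOn h (Icc a b)) (t : ℝ) :
    Set.Nonempty {y : ℝ | ∃ z : ℝ → ℝ, ConcaveOn ℝ (Icc a b) z ∧ (∀ x ∈ Icc a b, h x ≤ z x) ∧ y = z t} := by
  obtain ⟨C, hC⟩ := (isCompact_Icc.image_of_continuousOn hcont).bddAbove
  exact ⟨C, fun _ => C, concaveOn_const C (convex_Icc a b),
    fun x hx => hC ⟨x, hx, rfl⟩, rfl⟩

lemma S_bddBelow (ht : t ∈ Icc a b) :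
    BddBelow {y : ℝ | ∃ z : ℝ → ℝ, ConcaveOn ℝ (Icc a b) z ∧ (∀ x ∈ Icc a b, h x ≤ z x) ∧ y = z t} :=
  ⟨h t, fun _ ⟨_, _, hzh, hy⟩ => hy ▸ hzh t ht⟩

lemma le_lcm (hcont : ContinuousOn h (Icc a b)) (ht : t ∈ Icc a b) :
    h t ≤ lcm a b h t :=
  le_csInf (S_nonempty hcont t) (fun _ ⟨_, _, hzh, hy⟩ => hy ▸ hzh t ht)

lemma lcm_le {z : ℝ → ℝ} (hz : ConcaveOn ℝ (Icc a b) z) (hzh : ∀ x ∈ Icc a b, h x ≤ z x)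
    (ht : t ∈ Icc a b) : lcm a b h t ≤ z t :=
  csInf_le (S_bddBelow ht) ⟨z, hz, hzh, rfl⟩

lemma lcm_concave (hcont : ContinuousOn h (Icc a b)) :
    ConcaveOn ℝ (Icc a b) (lcm a b h) := by
  refine ⟨convex_Icc a b, fun x hx y hy p q hp hq hpq => ?_⟩
  refine le_csInf (S_nonempty hcont _) ?_
  rintro w ⟨z, hz, hzh, rfl⟩
  have h1 : lcm a b h x ≤ z x := lcm_le hz hzh hx
  have h2 : lcm a b h y ≤ z y := lcm_le hz hzh hy
  have h3 := hz.2 hx hy hp hq hpq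
  simp only [smul_eq_mul] at *
  nlinarith [mul_le_mul_of_nonneg_left h1 hp, mul_le_mul_of_nonneg_left h2 hq]

/-- chord below concave function on [c,d] -/
lemma chord_le {F : ℝ → ℝ} (hF : ConcaveOn ℝ (Icc a b) F) {c d x : ℝ}
    (hc : c ∈ Icc a b) (hd : d ∈ Icc a b) (hcd : c < d) (hx : x ∈ Icc c d) :
    ((d - x) * F c + (x - c) * F d) / (d - c) ≤ F x := by
  have hdc : (0:ℝ) < d - c := by linarith
  have hp : (0:ℝ) ≤ (d - x) / (d - c) := div_nonneg (by linarith [hx.2]) hdc.le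
  have hq : (0:ℝ) ≤ (x - c) / (d - c) := div_nonneg (by linarith [hx.1]) hdc.le
  have hpq : (d - x) / (d - c) + (x - c) / (d - c) = 1 := by field_simp; ring
  have h3 := hF.2 hc hd hp hq hpq
  simp only [smul_eq_mul] at h3
  have hxe : (d - x) / (d - c) * c + (x - c) / (d - c) * d = x := by field_simp; ring
  rw [hxe] at h3
  calc ((d - x) * F c + (x - c) * F d) / (d - c)
      = (d - x) / (d - c) * F c + (x - c) / (d - c) * F d := by ring
    _ ≤ F x := h3

/-- concave function below the chord-line, left of [c,d] -/
lemma le_chord_left {F : ℝ → ℝ} (hF : ConcaveOn ℝ (Icc a b) F) {c d x : ℝ}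
    (hd : d ∈ Icc a b) (hcd : c < d) (hx : x ∈ Icc a b) (hxc : x ≤ c) :
    F x ≤ ((d - x) * F c + (x - c) * F d) / (d - c) := by
  have hdc : (0:ℝ) < d - c := by linarith
  have hdx : (0:ℝ) < d - x := by linarith
  have hp : (0:ℝ) ≤ (d - c) / (d - x) := div_nonneg hdc.le hdx.le
  have hq : (0:ℝ) ≤ (c - x) / (d - x) := div_nonneg (by linarith) hdx.le
  have hpq : (d - c) / (d - x) + (c - x) / (d - x) = 1 := by field_simp; ring
  have h3 := hF.2 hx hd hp hq hpq
  simp only [smul_eq_mul] at h3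
  have hce : (d - c) / (d - x) * x + (c - x) / (d - x) * d = c := by field_simp; ring
  rw [hce] at h3
  rw [le_div_iff₀ hdc]
  have h4 := mul_le_mul_of_nonneg_right h3 hdx.le
  have h5 : ((d - c) / (d - x) * F x + (c - x) / (d - x) * F d) * (d - x)
      = (d - c) * F x + (c - x) * F d := by field_simp
  rw [h5] at h4
  nlinarith

/-- concave function below the chord-line, right of [c,d] -/
lemma le_chord_right {F : ℝ → ℝ} (hF : ConcaveOn ℝ (Icc a b) F) {c d x : ℝ}
    (hc : c ∈ Icc a b) (hcd : c < d) (hx : x ∈ Icc a b) (hxd : d ≤ x) :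
    F x ≤ ((d - x) * F c + (x - c) * F d) / (d - c) := by
  have hdc : (0:ℝ) < d - c := by linarith
  have hxc : (0:ℝ) < x - c := by linarith
  have hp : (0:ℝ) ≤ (x - d) / (x - c) := div_nonneg (by linarith) hxc.le
  have hq : (0:ℝ) ≤ (d - c) / (x - c) := div_nonneg hdc.le hxc.le
  have hpq : (x - d) / (x - c) + (d - c) / (x - c) = 1 := by field_simp; ring
  have h3 := hF.2 hc hx hp hq hpq
  simp only [smul_eq_mul] at h3
  have hde : (x - d) / (x - c) * c + (d - c) / (x - c) * x = d := by field_simp; ring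
  rw [hde] at h3
  rw [le_div_iff₀ hdc]
  have h4 := mul_le_mul_of_nonneg_right h3 hxc.le
  have h5 : ((x - d) / (x - c) * F c + (d - c) / (x - c) * F x) * (x - c)
      = (x - d) * F c + (d - c) * F x := by field_simp
  rw [h5] at h4
  nlinarith

/-- the chord line is concave (it is affine) -/
lemma chord_concave (vc vd c d : ℝ) :
    ConcaveOn ℝ (Icc a b) (fun x => ((d - x) * vc + (x - c) * vd) / (d - c)) := by
  refine ⟨convex_Icc a b, fun x _ y _ p q hp hq hpq => le_of_eq ?_⟩
  simp only [smul_eq_mul]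
  linear_combination ((d * vc - c * vd) / (d - c)) * hpq

end LcmAux

/-- The support of the Stieltjes measure induced by the (non-increasing) left derivative
of the least concave majorant is contained in the contact set `{T(h) = h}`. -/
theorem support_stieltjes_lcm_deriv_subset_contact (a b : ℝ) (hab : a < b) (h : ℝ → ℝ)
    (hcont : ContinuousOn h (Icc a b))
    (g : ℝ → ℝ)
    -- `g` is the left derivative of the least concave majorant on `(a,b]`
    (hg : ∀ t ∈ Ioc a b, HasDerivWithinAt (lcm a b h) (g t) (Iio t) t)
    (hmono : AntitoneOn g (Ioc a b))
    (μ : Measure ℝ)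
    -- `μ` is the Stieltjes measure `d(-g)` induced by the monotone non-increasing `g`
    (hμ : ∀ s t : ℝ, s ∈ Ioc a b → t ∈ Ioc a b → s ≤ t →
      μ (Ioc s t) = ENNReal.ofReal (g s - g t))
    (hμsupp : μ (Ioc a b)ᶜ = 0) :
    ∀ t : ℝ, (∀ U ∈ nhds t, 0 < μ U) → t ∈ Icc a b ∧ lcm a b h t = h t := by
  intro t hpos
  have ht : t ∈ Icc a b := by
    by_contra htn
    have hU : (Icc a b)ᶜ ∈ nhds t := isClosed_Icc.isOpen_compl.mem_nhds htn
    have h0 : μ (Icc a b)ᶜ = 0 :=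
      measure_mono_null (compl_subset_compl.mpr Ioc_subset_Icc_self) hμsupp
    exact absurd (hpos _ hU) (by simp [h0])
  refine ⟨ht, ?_⟩
  by_contra hne
  set F := lcm a b h with hFdef
  have hFh : ∀ x ∈ Icc a b, h x ≤ F x := fun x hx => LcmAux.le_lcm hcont hx
  have hFconc : ConcaveOn ℝ (Icc a b) F := LcmAux.lcm_concave hcont
  have hlt : h t < F t := lt_of_le_of_ne (hFh t ht) (Ne.symm hne)
  set ε := F t - h t with hεdef
  have hε : 0 < ε := by simp only [hεdef]; linarith
  -- slope constants
  set Ka := max 0 ((F t - F a) / (t - a)) with hKa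
  set Kb := max 0 ((F t - F b) / (b - t)) with hKb
  have hKa0 : 0 ≤ Ka := le_max_left _ _
  have hKb0 : 0 ≤ Kb := le_max_left _ _
  -- continuity modulus
  obtain ⟨δ₁, hδ₁pos, hδ₁⟩ := Metric.continuousWithinAt_iff.mp (hcont t ht) (ε/4) (by linarith)
  have hden : (0:ℝ) < 4 * (Ka + Kb + 1) := by nlinarith
  set δ := min (ε / (4 * (Ka + Kb + 1))) (δ₁ / 2) with hδdef
  have hδpos : 0 < δ := lt_min (div_pos hε hden) (by linarith)
  set c := max a (t - δ) with hcdef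
  set d := min b (t + δ) with hddef
  have hac : a ≤ c := le_max_left _ _
  have hdb : d ≤ b := min_le_left _ _
  have hct : c ≤ t := max_le ht.1 (by linarith)
  have htd : t ≤ d := le_min ht.2 (by linarith)
  have htdc : t - δ ≤ c := le_max_right _ _
  have hdtd : d ≤ t + δ := min_le_right _ _
  have hcd : c < d := by
    rcases lt_or_eq_of_le ht.2 with hb | hb
    · exact lt_of_le_of_lt hct (lt_min hb (by linarith))
    · exact lt_of_lt_of_le (max_lt (by linarith) (by linarith)) htd
  have hcab : c ∈ Icc a b := ⟨hac, (hct.trans htd).trans hdb⟩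
  have hdab : d ∈ Icc a b := ⟨hac.trans hcd.le, hdb⟩
  -- lower bound for F near t, left side
  have hlbL : ∀ x, a ≤ x → x ≤ t → F t - F x ≤ Ka * (t - x) := by
    intro x hax hxt
    rcases eq_or_lt_of_le hxt with rfl | hxt'
    · simp
    · have hat : a < t := lt_of_le_of_lt hax hxt'
      have hta : (0:ℝ) < t - a := by linarith
      have hch := LcmAux.chord_le hFconc (left_mem_Icc.mpr hab.le) ht hat ⟨hax, hxt⟩
      rw [div_le_iff₀ hta] at hch
      have hmax : (F t - F a) / (t - a) ≤ Ka := le_max_right _ _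
      rw [div_le_iff₀ hta] at hmax
      nlinarith [mul_le_mul_of_nonneg_left hmax (sub_nonneg.mpr hxt)]
  -- lower bound for F near t, right side
  have hlbR : ∀ x, t ≤ x → x ≤ b → F t - F x ≤ Kb * (x - t) := by
    intro x htx hxb
    rcases eq_or_lt_of_le htx with rfl | htx'
    · simp
    · have htb : t < b := lt_of_lt_of_le htx' hxb
      have hbt : (0:ℝ) < b - t := by linarith
      have hch := LcmAux.chord_le hFconc ht (right_mem_Icc.mpr hab.le) htb ⟨htx, hxb⟩
      rw [div_le_iff₀ hbt] at hch
      have hmax : (F t - F b) / (b - t) ≤ Kb := le_max_right _ _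
      rw [div_le_iff₀ hbt] at hmax
      nlinarith [mul_le_mul_of_nonneg_left hmax (sub_nonneg.mpr htx)]
  have hKδ : (Ka + Kb) * δ ≤ ε / 4 := by
    have h1 : δ ≤ ε / (4 * (Ka + Kb + 1)) := min_le_left _ _
    have h2 : (Ka + Kb) * δ ≤ (Ka + Kb) * (ε / (4 * (Ka + Kb + 1))) :=
      mul_le_mul_of_nonneg_left h1 (by linarith)
    have h3 : (Ka + Kb) * (ε / (4 * (Ka + Kb + 1))) ≤ ε / 4 := by
      rw [← mul_div_assoc, div_le_div_iff₀ hden (by norm_num : (0:ℝ) < 4)]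
      nlinarith
    linarith
  -- F is large on [c,d]
  have hFlow : ∀ x ∈ Icc c d, F t - ε / 4 ≤ F x := by
    intro x hx
    have hxab : x ∈ Icc a b := ⟨hac.trans hx.1, hx.2.trans hdb⟩
    rcases le_total x t with hxt | htx
    · have h1 := hlbL x hxab.1 hxt
      have h2 : t - x ≤ δ := by linarith [hx.1]
      have h3 : Ka * (t - x) ≤ Ka * δ := mul_le_mul_of_nonneg_left h2 hKa0
      nlinarith [mul_nonneg hKb0 hδpos.le]
    · have h1 := hlbR x htx hxab.2
      have h2 : x - t ≤ δ := by linarith [hx.2]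
      have h3 : Kb * (x - t) ≤ Kb * δ := mul_le_mul_of_nonneg_left h2 hKb0
      nlinarith [mul_nonneg hKa0 hδpos.le]
  -- h is small on [c,d]
  have hhigh : ∀ x ∈ Icc c d, h x ≤ h t + ε / 4 := by
    intro x hx
    have hxab : x ∈ Icc a b := ⟨hac.trans hx.1, hx.2.trans hdb⟩
    have hdist : dist x t < δ₁ := by
      rw [Real.dist_eq]
      have hδδ : δ ≤ δ₁ / 2 := min_le_right _ _
      have := abs_le.mpr (⟨by linarith [hx.1], by linarith [hx.2]⟩ : -δ ≤ x - t ∧ x - t ≤ δ)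
      linarith
    have := hδ₁ hxab hdist
    rw [Real.dist_eq, abs_lt] at this
    linarith [this.2]
  -- the chord of F over [c,d]
  set A := fun x => ((d - x) * F c + (x - c) * F d) / (d - c) with hAdef
  set sl := (F d - F c) / (d - c) with hsl
  have hdc : (0:ℝ) < d - c := by linarith
  have hAc : A c = F c := by simp only [hAdef]; field_simp; ring
  have hAd : A d = F d := by simp only [hAdef]; field_simp; ring
  -- A dominates h on [c,d]
  have hAh : ∀ x ∈ Icc c d, h x ≤ A x := by
    intro x hx
    have hAmin : min (F c) (F d) ≤ A x := by
      simp only [hAdef]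
      rw [le_div_iff₀ hdc]
      rcases le_total (F c) (F d) with hm | hm
      · rw [min_eq_left hm]
        nlinarith [hx.1, hx.2]
      · rw [min_eq_right hm]
        nlinarith [hx.1, hx.2]
    have h1 : F t - ε / 4 ≤ F c := hFlow c ⟨le_refl c, hcd.le⟩
    have h2 : F t - ε / 4 ≤ F d := hFlow d ⟨hcd.le, le_refl d⟩
    have h3 : h x ≤ h t + ε / 4 := hhigh x hx
    have h4 : F t = h t + ε := by simp only [hεdef]; ring
    rcases le_total (F c) (F d) with hm | hm
    · rw [min_eq_left hm] at hAmin; linarith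
    · rw [min_eq_right hm] at hAmin; linarith
  -- z := F ⊓ A is a concave majorant of h
  have hAconc : ConcaveOn ℝ (Icc a b) A := LcmAux.chord_concave (F c) (F d) c d
  have hzconc : ConcaveOn ℝ (Icc a b) (F ⊓ A) := hFconc.inf hAconc
  have hzh : ∀ x ∈ Icc a b, h x ≤ (F ⊓ A) x := by
    intro x hx
    simp only [Pi.inf_apply]
    refine le_inf (hFh x hx) ?_
    rcases le_or_gt x c with h1 | h1
    · exact (hFh x hx).trans (LcmAux.le_chord_left hFconc hdab hcd hx h1)
    rcases le_or_gt x d with h2 | h2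
    · exact hAh x ⟨h1.le, h2⟩
    · exact (hFh x hx).trans (LcmAux.le_chord_right hFconc hcab hcd hx h2.le)
  -- F coincides with the chord on [c,d]
  have hFA : ∀ x ∈ Icc c d, F x = A x := by
    intro x hx
    have hxab : x ∈ Icc a b := ⟨hac.trans hx.1, hx.2.trans hdb⟩
    have h1 : F x ≤ (F ⊓ A) x := by
      rw [hFdef]
      exact LcmAux.lcm_le hzconc hzh hxab
    have h2 : A x ≤ F x := LcmAux.chord_le hFconc hcab hdab hcd hx
    have h3 : (F ⊓ A) x ≤ A x := by simp only [Pi.inf_apply]; exact inf_le_right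
    linarith
  -- hence g is constant (= sl) on (c, d]
  have hgsl : ∀ s ∈ Ioc c d, g s = sl := by
    intro s hs
    have hsab : s ∈ Ioc a b := ⟨lt_of_le_of_lt hac hs.1, hs.2.trans hdb⟩
    have hd1 : HasDerivAt A sl s := by
      have hder : HasDerivAt (fun y => ((d - y) * F c + (y - c) * F d) / (d - c))
          (((0 - 1) * F c + (1 - 0) * F d) / (d - c)) s :=
        ((((hasDerivAt_const s d).sub (hasDerivAt_id s)).mul_const (F c)).add
          (((hasDerivAt_id s).sub (hasDerivAt_const s c)).mul_const (F d))).div_const (d - c)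
      have heq : sl = ((0 - 1) * F c + (1 - 0) * F d) / (d - c) := by
        simp only [hsl]; ring
      rw [heq, hAdef]
      exact hder
    have hd2 : HasDerivWithinAt F sl (Iio s) s := by
      refine hd1.hasDerivWithinAt.congr_of_eventuallyEq ?_ (hFA s ⟨hs.1.le, hs.2⟩)
      have hmem : Ioi c ∈ nhdsWithin s (Iio s) :=
        nhdsWithin_le_nhds (isOpen_Ioi.mem_nhds hs.1)
      filter_upwards [hmem, self_mem_nhdsWithin] with x hx1 hx2
      exact hFA x ⟨hx1.le, (le_of_lt hx2).trans hs.2⟩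
    have e1 : derivWithin F (Iio s) s = g s :=
      (hg s hsab).derivWithin (uniqueDiffWithinAt_Iio s)
    have e2 : derivWithin F (Iio s) s = sl := hd2.derivWithin (uniqueDiffWithinAt_Iio s)
    rw [← e1, e2]
  -- μ vanishes on (c, d]
  have hdIoc : d ∈ Ioc c d := ⟨hcd, le_refl d⟩
  have hμcd : μ (Ioc c d) = 0 := by
    have hsub : Ioc c d ⊆ ⋃ n : ℕ, Ioc (c + (d - c) / ((n : ℝ) + 1)) d := by
      intro x hx
      obtain ⟨n, hn⟩ := exists_nat_gt ((d - c) / (x - c))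
      refine mem_iUnion.mpr ⟨n, ?_, hx.2⟩
      have hxc : (0:ℝ) < x - c := by linarith [hx.1]
      have hn1 : (d - c) / (x - c) < (n : ℝ) + 1 := by linarith
      rw [div_lt_iff₀ hxc] at hn1
      have h2 : (d - c) / ((n : ℝ) + 1) < x - c := by
        rw [div_lt_iff₀ (by positivity)]
        nlinarith
      linarith
    refine measure_mono_null hsub (measure_iUnion_null fun n => ?_)
    have hpos' : (0:ℝ) < (d - c) / ((n : ℝ) + 1) := by positivity
    have hle : (d - c) / ((n : ℝ) + 1) ≤ d - c := by
      rw [div_le_iff₀ (by positivity)]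
      nlinarith [(n.cast_nonneg : (0:ℝ) ≤ n)]
    have hs' : c + (d - c) / ((n : ℝ) + 1) ∈ Ioc c d := ⟨by linarith, by linarith⟩
    have hs'ab : c + (d - c) / ((n : ℝ) + 1) ∈ Ioc a b :=
      ⟨lt_of_le_of_lt hac hs'.1, hs'.2.trans hdb⟩
    have hdab' : d ∈ Ioc a b := ⟨lt_of_le_of_lt hac hcd, hdb⟩
    rw [hμ _ d hs'ab hdab' hs'.2, hgsl _ hs', hgsl d hdIoc]
    simp
  -- produce a neighborhood of t with zero measure: contradiction
  obtain ⟨c', hc't, hc'sub⟩ : ∃ c', c' < t ∧ ∀ x, c' < x → a < x → c < x := by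
    rcases lt_or_eq_of_le hct with h1 | h1
    · exact ⟨c, h1, fun x hx _ => hx⟩
    · have hat : a = t := by
        by_contra hne'
        have hlt' : c < t := max_lt (lt_of_le_of_ne ht.1 hne') (by linarith)
        exact absurd h1 (ne_of_lt hlt')
      exact ⟨t - 1, by linarith, fun x _ hax => by rw [h1, ← hat]; exact hax⟩
  obtain ⟨d', htd', hd'sub⟩ : ∃ d', t < d' ∧ ∀ x, x < d' → x ≤ b → x ≤ d := by
    rcases lt_or_eq_of_le htd with h1 | h1
    · exact ⟨d, h1, fun x hx _ => hx.le⟩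
    · have hbt : b = t := by
        by_contra hne'
        have hlt' : t < d := lt_min (lt_of_le_of_ne ht.2 (fun hh => hne' hh.symm)) (by linarith)
        exact absurd h1 (ne_of_lt hlt')
      exact ⟨t + 1, by linarith, fun x _ hxb => by rw [← h1, ← hbt]; exact hxb⟩
  have hU : Ioo c' d' ∈ nhds t := Ioo_mem_nhds hc't htd'
  have hUsub : Ioo c' d' ⊆ Ioc c d ∪ (Ioc a b)ᶜ := by
    intro x hx
    by_cases hxab : x ∈ Ioc a b
    · exact Or.inl ⟨hc'sub x hx.1 hxab.1, hd'sub x hx.2 hxab.2⟩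
    · exact Or.inr hxab
  have hμU : μ (Ioo c' d') = 0 := by
    refine le_antisymm ?_ (by positivity)
    calc μ (Ioo c' d') ≤ μ (Ioc c d ∪ (Ioc a b)ᶜ) := measure_mono hUsub
      _ ≤ μ (Ioc c d) + μ (Ioc a b)ᶜ := measure_union_le _ _
      _ = 0 := by rw [hμcd, hμsupp]; simp
  exact absurd (hpos _ hU) (by simp [hμU])
end

section
/- Let h be a continuous function on [a,b] and T(h) its least concave majorant. Then for every t in (a,b), the left derivative of T(h) at t equals min_{u < t} max_{v ≥ t} (h(v) - h(u))/(v - u), where u ranges over [a,t) and v over [t,b]. -/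
open Set

private lemma affine_concaveOn (s : Set ℝ) (hs : Convex ℝ s) (m q : ℝ) :
    ConcaveOn ℝ s (fun x => m * x + q) := by
  refine ⟨hs, fun x _ y _ p r hp hr hpr => le_of_eq ?_⟩
  simp only [smul_eq_mul]
  linear_combination q * hpr

/-- Min-max formula for the left derivative of the least concave majorant. -/
theorem lcm_leftDeriv_minmax (a b : ℝ) (hab : a < b) (h : ℝ → ℝ)
    (hcont : ContinuousOn h (Icc a b)) :
    ∀ t ∈ Ioo a b,
      DifferentiableWithinAt ℝ (lcm a b h) (Iio t) t ∧
      derivWithin (lcm a b h) (Iio t) t =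
        sInf {x : ℝ | ∃ u ∈ Ico a t,
          x = sSup {y : ℝ | ∃ v ∈ Icc t b, y = (h v - h u) / (v - u)}} := by
  intro t ht
  obtain ⟨hat, htb⟩ := ht
  set T : ℝ → ℝ := lcm a b h with hTdef
  have htmem : t ∈ Icc a b := ⟨hat.le, htb.le⟩
  have hamem : a ∈ Icc a b := left_mem_Icc.2 hab.le
  have hbmem : b ∈ Icc a b := right_mem_Icc.2 hab.le
  -- the defining sets are nonempty and bounded below
  obtain ⟨C, hC⟩ : BddAbove (h '' Icc a b) := isCompact_Icc.bddAbove_image hcont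
  have hSne : ∀ s : ℝ, {y : ℝ | ∃ z : ℝ → ℝ, ConcaveOn ℝ (Icc a b) z ∧
      (∀ x ∈ Icc a b, h x ≤ z x) ∧ y = z s}.Nonempty := fun s =>
    ⟨C, fun _ => C, concaveOn_const C (convex_Icc a b), fun x hx => hC ⟨x, hx, rfl⟩, rfl⟩
  have hSbdd : ∀ s ∈ Icc a b, BddBelow {y : ℝ | ∃ z : ℝ → ℝ, ConcaveOn ℝ (Icc a b) z ∧
      (∀ x ∈ Icc a b, h x ≤ z x) ∧ y = z s} := by
    intro s hs
    refine ⟨h s, ?_⟩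
    rintro y ⟨z, hz, hm, rfl⟩
    exact hm s hs
  have hhT : ∀ x ∈ Icc a b, h x ≤ T x := by
    intro x hx
    refine le_csInf (hSne x) ?_
    rintro y ⟨z, hz, hm, rfl⟩
    exact hm x hx
  have hTle : ∀ z : ℝ → ℝ, ConcaveOn ℝ (Icc a b) z → (∀ x ∈ Icc a b, h x ≤ z x) →
      ∀ s ∈ Icc a b, T s ≤ z s := by
    intro z hz hm s hs
    exact csInf_le (hSbdd s hs) ⟨z, hz, hm, rfl⟩
  have hTconc : ConcaveOn ℝ (Icc a b) T := by
    refine ⟨convex_Icc a b, fun x hx y hy p q hp hq hpq => ?_⟩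
    refine le_csInf (hSne _) ?_
    rintro w ⟨z, hz, hm, rfl⟩
    have h1 : T x ≤ z x := hTle z hz hm x hx
    have h2 : T y ≤ z y := hTle z hz hm y hy
    calc p • T x + q • T y ≤ p • z x + q • z y := by
          simp only [smul_eq_mul]
          exact add_le_add (mul_le_mul_of_nonneg_left h1 hp) (mul_le_mul_of_nonneg_left h2 hq)
      _ ≤ z (p • x + q • y) := hz.2 hx hy hp hq hpq
  -- slopes of T at t are antitone
  have hanti : AntitoneOn (slope T t) (Icc a b \ {t}) := by
    have hmono := (hTconc.neg).slope_mono htmem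
    intro x hx y hy hxy
    have := hmono hx hy hxy
    simp only [slope_neg, slope_neg_fun, Pi.neg_apply, neg_le_neg_iff] at this
    simpa using this
  have hmemD : ∀ s ∈ Ico a t, s ∈ Icc a b \ {t} :=
    fun s hs => ⟨⟨hs.1, hs.2.le.trans htb.le⟩, ne_of_lt hs.2⟩
  have hD_ne : (slope T t '' Ico a t).Nonempty := ⟨_, ⟨a, ⟨le_refl a, hat⟩, rfl⟩⟩
  have hD_bdd : BddBelow (slope T t '' Ico a t) := by
    refine ⟨slope T t b, ?_⟩
    rintro y ⟨s, hs, rfl⟩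
    exact hanti (hmemD s hs) ⟨hbmem, ne_of_gt htb⟩ (hs.2.le.trans htb.le)
  set d := sInf (slope T t '' Ico a t) with hd
  have hd_le : ∀ s ∈ Ico a t, d ≤ slope T t s := fun s hs => csInf_le hD_bdd ⟨s, hs, rfl⟩
  have hd_le' : ∀ s ∈ Ico a t, T s - T t ≤ d * (s - t) := by
    intro s hs
    have h1 := hd_le s hs
    rw [slope_def_field] at h1
    have hneg : s - t < 0 := sub_neg.2 hs.2
    exact (le_div_iff_of_neg hneg).1 h1
  have hright : ∀ v ∈ Icc t b, T v ≤ T t + d * (v - t) := by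
    intro v hv
    rcases eq_or_lt_of_le hv.1 with hvt | hvt
    · rw [← hvt]; simp
    · have hvD : v ∈ Icc a b \ {t} := ⟨⟨hat.le.trans hv.1, hv.2⟩, ne_of_gt hvt⟩
      have hsl : slope T t v ≤ d := by
        refine le_csInf hD_ne ?_
        rintro y ⟨s, hs, rfl⟩
        exact hanti (hmemD s hs) hvD (hs.2.le.trans hvt.le)
      rw [slope_def_field] at hsl
      have hpos : 0 < v - t := sub_pos.2 hvt
      have := (div_le_iff₀ hpos).1 hsl
      linarith
  -- facts about the inner suprema G u
  have hGsetne : ∀ u : ℝ, {y : ℝ | ∃ v ∈ Icc t b, y = (h v - h u) / (v - u)}.Nonempty :=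
    fun u => ⟨_, t, ⟨le_refl t, htb.le⟩, rfl⟩
  have hGbdd : ∀ u ∈ Ico a t, BddAbove {y : ℝ | ∃ v ∈ Icc t b, y = (h v - h u) / (v - u)} := by
    intro u hu
    have himg : {y : ℝ | ∃ v ∈ Icc t b, y = (h v - h u) / (v - u)} =
        (fun v => (h v - h u) / (v - u)) '' Icc t b := by
      ext y
      constructor
      · rintro ⟨v, hv, rfl⟩; exact ⟨v, hv, rfl⟩
      · rintro ⟨v, hv, rfl⟩; exact ⟨v, hv, rfl⟩
    rw [himg]
    refine IsCompact.bddAbove_image isCompact_Icc ?_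
    refine ContinuousOn.div ?_ ?_ ?_
    · exact (hcont.mono (Icc_subset_Icc hat.le le_rfl)).sub continuousOn_const
    · exact continuousOn_id.sub continuousOn_const
    · intro v hv
      have : 0 < v - u := sub_pos.2 (lt_of_lt_of_le hu.2 hv.1)
      exact ne_of_gt this
  -- Claim B : d ≤ G u for all u
  have claimB : ∀ u ∈ Ico a t, d ≤ sSup {y : ℝ | ∃ v ∈ Icc t b, y = (h v - h u) / (v - u)} := by
    intro u hu
    set c := sSup {y : ℝ | ∃ v ∈ Icc t b, y = (h v - h u) / (v - u)} with hc
    by_contra hcd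
    push_neg at hcd
    have humem : u ∈ Icc a b := ⟨hu.1, hu.2.le.trans htb.le⟩
    have hGle : ∀ v ∈ Icc t b, (h v - h u) / (v - u) ≤ c :=
      fun v hv => le_csSup (hGbdd u hu) ⟨v, hv, rfl⟩
    have hGle' : ∀ v ∈ Icc t b, h v ≤ h u + c * (v - u) := by
      intro v hv
      have hpos : 0 < v - u := sub_pos.2 (lt_of_lt_of_le hu.2 hv.1)
      have := (div_le_iff₀ hpos).1 (hGle v hv)
      linarith
    by_cases hcase : ∃ x ∈ Ico a t, T t + c * (x - t) ≤ T x
    · obtain ⟨x, hx, hxle⟩ := hcase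
      have h2 := hd_le' x hx
      have hneg : x - t < 0 := sub_neg.2 hx.2
      have h3 : d * (x - t) < c * (x - t) := mul_lt_mul_of_neg_right hcd hneg
      linarith
    · push_neg at hcase
      by_cases hht : T t ≤ h t
      · have hht' : h t = T t := le_antisymm (hhT t htmem) hht
        have h2 := hd_le' u hu
        have hneg : u - t < 0 := sub_neg.2 hu.2
        have hpos : 0 < t - u := by linarith
        have h4 : h t - h u ≤ c * (t - u) := by
          have := (div_le_iff₀ hpos).1 (hGle t ⟨le_rfl, htb.le⟩)
          linarith
        have h5 : h u ≤ T u := hhT u humem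
        have hring : c * (u - t) = -(c * (t - u)) := by ring
        have h6 : d * (u - t) < c * (u - t) := mul_lt_mul_of_neg_right hcd hneg
        linarith
      · push_neg at hht
        set P : ℝ → ℝ := fun x => c * x + (T t - c * t) with hP
        have hPval : ∀ x, P x = T t + c * (x - t) := fun x => by rw [hP]; ring
        have hPh : ∀ x ∈ Icc a b, h x < P x := by
          intro x hx
          rcases lt_trichotomy x t with hxt | hxt | hxt
          · have h1 := hcase x ⟨hx.1, hxt⟩
            have h2 := hhT x hx
            rw [hPval]; linarith
          · subst hxt; rw [hPval]; simpa using hht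
          · have h1 := hGle' x ⟨hxt.le, hx.2⟩
            have h2 := hcase u hu
            have h5 : h u ≤ T u := hhT u humem
            have hring : c * (x - u) + c * (u - t) = c * (x - t) := by ring
            rw [hPval]; linarith
        have hPcont : ContinuousOn (fun x => P x - h x) (Icc a b) := by
          refine ContinuousOn.sub ?_ hcont
          exact ((continuous_const.mul continuous_id).add continuous_const).continuousOn
        obtain ⟨x0, hx0mem, hx0min⟩ :=
          isCompact_Icc.exists_isMinOn (nonempty_Icc.2 hab.le) hPcont
        set ε := P x0 - h x0 with hε
        have hεpos : 0 < ε := sub_pos.2 (hPh x0 hx0mem)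
        set g : ℝ → ℝ := fun x => c * x + (T t - c * t - ε) with hg
        have hgval : ∀ x, g x = P x - ε := fun x => by rw [hg, hPval]; ring
        have hzconc : ConcaveOn ℝ (Icc a b) (T ⊓ g) :=
          hTconc.inf (affine_concaveOn _ (convex_Icc a b) _ _)
        have hzmaj : ∀ x ∈ Icc a b, h x ≤ (T ⊓ g) x := by
          intro x hx
          refine le_inf (hhT x hx) ?_
          have hmin := (isMinOn_iff.1 hx0min) x hx
          rw [hgval]
          linarith
        have hTz := hTle _ hzconc hzmaj t htmem
        have h7 : (T ⊓ g) t ≤ g t := inf_le_right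
        have h8 : g t = T t - ε := by rw [hgval, hPval]; ring
        linarith [hTz.trans h7]
  -- the target infimum M
  set M := sInf {x : ℝ | ∃ u ∈ Ico a t,
      x = sSup {y : ℝ | ∃ v ∈ Icc t b, y = (h v - h u) / (v - u)}} with hM
  have hMne : {x : ℝ | ∃ u ∈ Ico a t,
      x = sSup {y : ℝ | ∃ v ∈ Icc t b, y = (h v - h u) / (v - u)}}.Nonempty :=
    ⟨_, a, ⟨le_rfl, hat⟩, rfl⟩
  have hMbdd : BddBelow {x : ℝ | ∃ u ∈ Ico a t,
      x = sSup {y : ℝ | ∃ v ∈ Icc t b, y = (h v - h u) / (v - u)}} := by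
    refine ⟨d, ?_⟩
    rintro x ⟨u, hu, rfl⟩
    exact claimB u hu
  have hdM : d ≤ M := by
    refine le_csInf hMne ?_
    rintro x ⟨u, hu, rfl⟩
    exact claimB u hu
  have hMd : M ≤ d := by
    refine le_of_forall_pos_le_add ?_
    intro ε hε
    by_cases hcase : ∃ u ∈ Ico a t, T t + d * (u - t) - h u ≤ ε * (t - u)
    · obtain ⟨u, hu, hule⟩ := hcase
      have hMle : M ≤ sSup {y : ℝ | ∃ v ∈ Icc t b, y = (h v - h u) / (v - u)} :=
        csInf_le hMbdd ⟨u, hu, rfl⟩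
      refine hMle.trans (csSup_le (hGsetne u) ?_)
      rintro y ⟨v, hv, rfl⟩
      have hpos : 0 < v - u := sub_pos.2 (lt_of_lt_of_le hu.2 hv.1)
      rw [div_le_iff₀ hpos]
      have h1 := hright v hv
      have h2 := hhT v ⟨hat.le.trans hv.1, hv.2⟩
      have h3 : t - u ≤ v - u := by linarith [hv.1]
      have h4 : ε * (t - u) ≤ ε * (v - u) := mul_le_mul_of_nonneg_left h3 hε.le
      have hr1 : d * (v - t) = d * (v - u) + d * (u - t) := by ring
      have hr2 : (d + ε) * (v - u) = d * (v - u) + ε * (v - u) := by ring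
      linarith
    · push_neg at hcase
      exfalso
      set Q : ℝ → ℝ := fun x => (d + ε) * x + (T t - (d + ε) * t) with hQ
      have hQval : ∀ x, Q x = T t + (d + ε) * (x - t) := fun x => by rw [hQ]; ring
      have hQconc := affine_concaveOn (Icc a b) (convex_Icc a b) (d + ε) (T t - (d + ε) * t)
      have hQmaj : ∀ x ∈ Icc a b, h x ≤ Q x := by
        intro x hx
        rcases lt_or_ge x t with hxt | hxt
        · have h1 := hcase x ⟨hx.1, hxt⟩
          have hr : d * (x - t) - ε * (t - x) = (d + ε) * (x - t) := by ring
          rw [hQval]; linarith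
        · have h1 := hright x ⟨hxt, hx.2⟩
          have h2 := hhT x hx
          have h3 : 0 ≤ ε * (x - t) := mul_nonneg hε.le (sub_nonneg.2 hxt)
          have hr : (d + ε) * (x - t) = d * (x - t) + ε * (x - t) := by ring
          rw [hQval]; linarith
      obtain ⟨y, ⟨s, hs, rfl⟩, hsl⟩ := exists_lt_of_csInf_lt hD_ne (lt_add_of_pos_right d hε)
      have hTs := hTle Q hQconc hQmaj s ⟨hs.1, hs.2.le.trans htb.le⟩
      rw [hQval] at hTs
      rw [slope_def_field] at hsl
      have hneg : s - t < 0 := sub_neg.2 hs.2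
      have h9 : (d + ε) * (s - t) < T s - T t := (div_lt_iff_of_neg hneg).1 hsl
      linarith
  -- T has left derivative d at t
  have hderiv : HasDerivWithinAt T d (Iio t) t := by
    rw [hasDerivWithinAt_iff_tendsto_slope]
    have hIio : Iio t \ {t} = Iio t := by
      ext x
      simp only [mem_diff, mem_Iio, mem_singleton_iff]
      exact ⟨fun hx => hx.1, fun hx => ⟨hx, ne_of_lt hx⟩⟩
    rw [hIio, tendsto_order]
    constructor
    · intro l hl
      filter_upwards [Ioo_mem_nhdsLT hat] with s hs
      have := hd_le s ⟨hs.1.le, hs.2⟩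
      linarith
    · intro u' hu'
      obtain ⟨y, ⟨s0, hs0, rfl⟩, hsl⟩ := exists_lt_of_csInf_lt hD_ne hu'
      filter_upwards [Ioo_mem_nhdsLT hs0.2] with s hs
      have hmono := hanti (hmemD s0 hs0)
        (hmemD s ⟨hs0.1.trans hs.1.le, hs.2⟩) hs.1.le
      exact lt_of_le_of_lt hmono hsl
  refine ⟨hderiv.differentiableWithinAt, ?_⟩
  rw [hderiv.derivWithin (uniqueDiffWithinAt_Iio t)]
  exact le_antisymm hdM hMd
end

section
/- Let g ∈ L²([0,π]), ḡ its primitive, and f̂ = T(ḡ)' the left derivative of the least concave majorant of ḡ. Then ∫₀^π (T(ḡ)(t) − ḡ(t)) d f̂(t) = 0, where d f̂ denotes the Stieltjes measure induced by the monotone function f̂. -/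
open Set MeasureTheory intervalIntegral Real

set_option maxHeartbeats 1600000 in
/-- `∫₀^π (T(ḡ) − ḡ) d f̂ = 0`, where `f̂ = T(ḡ)'` is the non-increasing left derivative
of the least concave majorant of the primitive `ḡ` of `g`, and `d f̂` is the Stieltjes
measure induced by the monotone function `f̂`. -/
theorem integral_lcm_minus_primitive_wrt_derivative_eq_zero (g : ℝ → ℝ)
    (hg : MemLp g 2 (volume.restrict (Icc 0 π)))
    (fhat : ℝ → ℝ)
    (hfhat : ∀ t ∈ Ioc 0 π,
      HasDerivWithinAt (lcm 0 π (fun t => ∫ s in (0:ℝ)..t, g s)) (fhat t) (Iio t) t)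
    (hmono : AntitoneOn fhat (Ioc 0 π))
    (μ : Measure ℝ) (hμfin : IsFiniteMeasure μ)
    -- `μ` is the Stieltjes measure `|d f̂|` induced by the non-increasing `f̂`
    (hμ : ∀ s t : ℝ, s ∈ Ioc 0 π → t ∈ Ioc 0 π → s ≤ t →
      μ (Ioc s t) = ENNReal.ofReal (fhat s - fhat t))
    (hμsupp : μ (Ioc 0 π)ᶜ = 0) :
    ∫ t in Icc 0 π, (lcm 0 π (fun t => ∫ s in (0:ℝ)..t, g s) t - ∫ s in (0:ℝ)..t, g s) ∂μ
      = 0 := by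
  have hπ : (0:ℝ) < π := pi_pos
  set G : ℝ → ℝ := fun t => ∫ s in (0:ℝ)..t, g s with hGdef
  set T : ℝ → ℝ := lcm 0 π G with hTdef
  have hTt : ∀ t : ℝ, T t =
      sInf {y : ℝ | ∃ z : ℝ → ℝ, ConcaveOn ℝ (Icc 0 π) z ∧ (∀ x ∈ Icc 0 π, G x ≤ z x) ∧ y = z t} :=
    fun t => by rw [hTdef]; rfl
  -- integrability and continuity of G on [0, π]
  have hfinI : IsFiniteMeasure (volume.restrict (Icc 0 π)) :=
    ⟨by rw [Measure.restrict_apply_univ]; exact measure_Icc_lt_top⟩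
  have hInt : IntegrableOn g (Icc 0 π) volume := hg.integrable one_le_two
  have Gco : ContinuousOn G (Icc 0 π) := by
    refine (intervalIntegral.continuousOn_primitive hInt).congr ?_
    intro x hx
    simp only [hGdef]
    rw [intervalIntegral.integral_of_le hx.1]
  obtain ⟨C, hC⟩ := (isCompact_Icc.image_of_continuousOn Gco).bddAbove
  have hCb : ∀ x ∈ Icc (0:ℝ) π, G x ≤ C := fun x hx => hC (mem_image_of_mem G hx)
  -- basic properties of T
  have Tle : ∀ z : ℝ → ℝ, ConcaveOn ℝ (Icc 0 π) z → (∀ x ∈ Icc 0 π, G x ≤ z x) →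
      ∀ t ∈ Icc (0:ℝ) π, T t ≤ z t := by
    intro z hz hzG t ht
    rw [hTt]
    exact csInf_le ⟨G t, fun y ⟨w, hw, hwG, hy⟩ => hy ▸ hwG t ht⟩ ⟨z, hz, hzG, rfl⟩
  have Sne : ∀ t : ℝ, Set.Nonempty
      {y : ℝ | ∃ z : ℝ → ℝ, ConcaveOn ℝ (Icc 0 π) z ∧ (∀ x ∈ Icc 0 π, G x ≤ z x) ∧ y = z t} :=
    fun t => ⟨C, fun _ => C, concaveOn_const C (convex_Icc _ _), hCb, rfl⟩
  have TG : ∀ t ∈ Icc (0:ℝ) π, G t ≤ T t := by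
    intro t ht
    rw [hTt]
    exact le_csInf (Sne t) (fun y ⟨w, hw, hwG, hy⟩ => hy ▸ hwG t ht)
  have Tconc : ConcaveOn ℝ (Icc 0 π) T := by
    refine ⟨convex_Icc _ _, fun x hx y hy a b ha hb hab => ?_⟩
    rw [hTt]
    refine le_csInf (Sne _) ?_
    rintro y' ⟨z, hz, hzG, rfl⟩
    calc a • T x + b • T y ≤ a • z x + b • z y := by
          gcongr
          · exact Tle z hz hzG x hx
          · exact Tle z hz hzG y hy
      _ ≤ z (a • x + b • y) := hz.2 hx hy ha hb hab
  -- chord of T lies below T inside [c,d]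
  have chord_inside : ∀ c d : ℝ, c ∈ Icc (0:ℝ) π → d ∈ Icc (0:ℝ) π → c < d → ∀ x : ℝ,
      c ≤ x → x ≤ d → T c + (x - c) * ((T d - T c) / (d - c)) ≤ T x := by
    intro c d hc hd hcd x hcx hxd
    have hdc : (0:ℝ) < d - c := by linarith
    have ha : (0:ℝ) ≤ (d - x) / (d - c) := div_nonneg (by linarith) hdc.le
    have hb : (0:ℝ) ≤ (x - c) / (d - c) := div_nonneg (by linarith) hdc.le
    have hab : (d - x) / (d - c) + (x - c) / (d - c) = 1 := by
      field_simp
      ring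
    have h2 := Tconc.2 hc hd ha hb hab
    simp only [smul_eq_mul] at h2
    have hcomb : (d - x) / (d - c) * c + (x - c) / (d - c) * d = x := by
      field_simp
      ring
    rw [hcomb] at h2
    have he : T c + (x - c) * ((T d - T c) / (d - c))
        = (d - x) / (d - c) * T c + (x - c) / (d - c) * T d := by
      field_simp
      ring
    linarith [h2, he.ge, he.le]
  -- chord of T lies above T outside [c,d]
  have chord_outside : ∀ c d : ℝ, c ∈ Icc (0:ℝ) π → d ∈ Icc (0:ℝ) π → c < d → ∀ x ∈ Icc (0:ℝ) π,
      (x ≤ c ∨ d ≤ x) → T x ≤ T c + (x - c) * ((T d - T c) / (d - c)) := by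
    intro c d hc hd hcd x hx hcase
    have hdc : (0:ℝ) < d - c := by linarith
    have hsd : (T d - T c) / (d - c) * (d - c) = T d - T c := div_mul_cancel₀ _ (ne_of_gt hdc)
    rcases hcase with hxc | hdx
    · rcases eq_or_lt_of_le hxc with h | h
      · subst h; simp
      · have hsl := Tconc.slope_anti_adjacent hx hd h hcd
        have h3 : (T d - T c) / (d - c) * (c - x) ≤ T c - T x :=
          (le_div_iff₀ (by linarith : (0:ℝ) < c - x)).mp hsl
        have h4 : (x - c) * ((T d - T c) / (d - c)) = -((T d - T c) / (d - c) * (c - x)) := by ring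
        linarith
    · rcases eq_or_lt_of_le hdx with h | h
      · subst h
        have h4 : (d - c) * ((T d - T c) / (d - c)) = (T d - T c) / (d - c) * (d - c) := by ring
        linarith
      · have hsl := Tconc.slope_anti_adjacent hc hx hcd h
        have h3 : T x - T d ≤ (T d - T c) / (d - c) * (x - d) :=
          (div_le_iff₀ (by linarith : (0:ℝ) < x - d)).mp hsl
        have h4 : (x - c) * ((T d - T c) / (d - c))
            = (T d - T c) / (d - c) * (x - d) + (T d - T c) / (d - c) * (d - c) := by ring
        linarith
  -- on intervals where G stays strictly below T at the endpoints, T is affine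
  have affine : ∀ c d : ℝ, 0 < c → c < d → d ≤ π →
      (∀ x : ℝ, c ≤ x → x ≤ d → G x < min (T c) (T d)) →
      ∀ x : ℝ, c ≤ x → x ≤ d → T x = T c + (x - c) * ((T d - T c) / (d - c)) := by
    intro c d hc0 hcd hdπ hGm x hcx hxd
    have hc : c ∈ Icc (0:ℝ) π := ⟨hc0.le, by linarith⟩
    have hd : d ∈ Icc (0:ℝ) π := ⟨by linarith, hdπ⟩
    have hdc : (0:ℝ) < d - c := by linarith
    set L : ℝ → ℝ := fun y => T c + (y - c) * ((T d - T c) / (d - c)) with hLdef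
    have hLd : L d = T d := by
      simp only [hLdef]
      have : (d - c) * ((T d - T c) / (d - c)) = T d - T c := by
        field_simp
      linarith
    have hLconc : ConcaveOn ℝ (Icc 0 π) L := by
      refine ⟨convex_Icc _ _, fun p hp q hq a b ha hb hab => ?_⟩
      simp only [hLdef, smul_eq_mul]
      have : a * (T c + (p - c) * ((T d - T c) / (d - c)))
          + b * (T c + (q - c) * ((T d - T c) / (d - c)))
          = T c + ((a * p + b * q) - c) * ((T d - T c) / (d - c)) := by
        linear_combination (T c - c * ((T d - T c) / (d - c))) * hab
      linarith
    have hzG : ∀ y ∈ Icc (0:ℝ) π, G y ≤ (T ⊓ L) y := by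
      intro y hy
      rcases le_or_gt y c with h1 | h1
      · have hout := chord_outside c d hc hd hcd y hy (Or.inl h1)
        exact le_inf (TG y hy) (le_trans (TG y hy) hout)
      · rcases le_or_gt y d with h2 | h2
        · have hGy := hGm y h1.le h2
          refine le_inf (TG y hy) (le_trans hGy.le ?_)
          rcases le_or_gt 0 ((T d - T c) / (d - c)) with hs | hs
          · have : T c ≤ L y := by
              simp only [hLdef]
              nlinarith
            exact le_trans (min_le_left _ _) this
          · have : T d ≤ L y := by
              rw [← hLd]
              simp only [hLdef]
              nlinarith
            exact le_trans (min_le_right _ _) this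
        · have hout := chord_outside c d hc hd hcd y hy (Or.inr h2.le)
          exact le_inf (TG y hy) (le_trans (TG y hy) hout)
    have hTleinf := Tle (T ⊓ L) (Tconc.inf hLconc) hzG
    have hx0 : x ∈ Icc (0:ℝ) π := ⟨by linarith, by linarith⟩
    have h1 : T x ≤ L x := le_trans (hTleinf x hx0) inf_le_right
    have h2 : L x ≤ T x := chord_inside c d hc hd hcd x hcx hxd
    exact le_antisymm h1 h2
  -- on such intervals, the left derivative fhat is constant (equal to the slope)
  have fconst : ∀ c d : ℝ, 0 < c → c < d → d ≤ π →
      (∀ x : ℝ, c ≤ x → x ≤ d → G x < min (T c) (T d)) →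
      ∀ t : ℝ, c < t → t ≤ d → fhat t = (T d - T c) / (d - c) := by
    intro c d hc0 hcd hdπ hGm t hct htd
    have ht : t ∈ Ioc 0 π := ⟨lt_trans hc0 hct, le_trans htd hdπ⟩
    have hD := hfhat t ht
    have hl : HasDerivWithinAt (fun y => T c + (y - c) * ((T d - T c) / (d - c)))
        ((T d - T c) / (d - c)) (Iio t) t := by
      have h := (((hasDerivAt_id t).sub_const c).mul_const ((T d - T c) / (d - c))).const_add (T c)
      simpa using h.hasDerivWithinAt
    have heq : T =ᶠ[nhdsWithin t (Iio t)]
        (fun y => T c + (y - c) * ((T d - T c) / (d - c))) := by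
      filter_upwards [nhdsWithin_le_nhds (Ioi_mem_nhds hct), self_mem_nhdsWithin] with y hy1 hy2
      exact affine c d hc0 hcd hdπ hGm y (le_of_lt hy1) (le_trans (le_of_lt hy2) htd)
    have hDl : HasDerivWithinAt T ((T d - T c) / (d - c)) (Iio t) t :=
      hl.congr_of_eventuallyEq heq (affine c d hc0 hcd hdπ hGm t hct.le htd)
    have u1 := hD.derivWithin (uniqueDiffWithinAt_Iio t)
    have u2 := hDl.derivWithin (uniqueDiffWithinAt_Iio t)
    rw [← u1, ← u2]
  -- the "off-contact" set
  set U : Set ℝ := {t | t ∈ Ioc 0 π ∧ G t < T t} with hUdef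
  have loc : ∀ t₀ ∈ U, ∃ u ∈ nhdsWithin t₀ U, μ u = 0 := by
    rintro t₀ ⟨⟨ht01, ht02⟩, hGT⟩
    set m := (G t₀ + T t₀) / 2 with hm
    have hm1 : G t₀ < m := by rw [hm]; linarith
    have hm2 : m < T t₀ := by rw [hm]; linarith
    have ht₀Icc : t₀ ∈ Icc (0:ℝ) π := ⟨ht01.le, ht02⟩
    have hcw := Gco t₀ ht₀Icc
    rw [Metric.continuousWithinAt_iff] at hcw
    obtain ⟨δ, hδ0, hδ⟩ := hcw (m - G t₀) (by linarith)
    have hGδ : ∀ x ∈ Icc (0:ℝ) π, dist x t₀ < δ → G x < m := by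
      intro x hx hdx
      have h1 := hδ hx hdx
      rw [Real.dist_eq] at h1
      have h2 := abs_lt.mp h1
      linarith [h2.1, h2.2]
    -- choose c < t₀ with T c > m
    obtain ⟨c, hc0, hct, hcδ, hTc⟩ : ∃ c : ℝ, 0 < c ∧ c < t₀ ∧ t₀ - c < δ ∧ m < T c := by
      set K := (T t₀ - T 0) / (t₀ - 0) with hK
      set η := min (min (δ/2) (t₀/2)) ((T t₀ - m)/(|K| + 1)) with hη
      have hK1 : (0:ℝ) < |K| + 1 := by positivity
      have hη0 : 0 < η :=
        lt_min (lt_min (by linarith) (by linarith)) (div_pos (by linarith) hK1)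
      have hηδ : η ≤ δ/2 := le_trans (min_le_left _ _) (min_le_left _ _)
      have hηt : η ≤ t₀/2 := le_trans (min_le_left _ _) (min_le_right _ _)
      have hηK : η ≤ (T t₀ - m)/(|K| + 1) := min_le_right _ _
      refine ⟨t₀ - η, by linarith, by linarith, by linarith, ?_⟩
      have hch := chord_inside 0 t₀ ⟨le_refl 0, hπ.le⟩ ht₀Icc ht01 (t₀ - η)
        (by linarith) (by linarith)
      rw [← hK] at hch
      have hKt : K * (t₀ - 0) = T t₀ - T 0 := div_mul_cancel₀ _ (by linarith)
      have h2 : η * K ≤ η * |K| := mul_le_mul_of_nonneg_left (le_abs_self K) hη0.le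
      have h3 : η * |K| ≤ (T t₀ - m)/(|K| + 1) * |K| :=
        mul_le_mul_of_nonneg_right hηK (abs_nonneg K)
      have h4 : (T t₀ - m)/(|K| + 1) * |K| < T t₀ - m := by
        rw [div_mul_eq_mul_div, div_lt_iff₀ hK1]
        nlinarith [abs_nonneg K]
      have hr : (t₀ - η - 0) * K = K * (t₀ - 0) - η * K := by ring
      linarith
    -- choose d ≥ t₀ with T d > m
    obtain ⟨d, htd, hdπ, hdδ, hTd, hcase⟩ :
        ∃ d : ℝ, t₀ ≤ d ∧ d ≤ π ∧ d - t₀ < δ ∧ m < T d ∧ (t₀ < d ∨ d = π) := by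
      rcases eq_or_lt_of_le ht02 with hteq | htlt
      · refine ⟨π, by rw [hteq], le_refl _, by rw [← hteq]; linarith, ?_, Or.inr rfl⟩
        rw [← hteq]; exact hm2
      · set K := (T π - T t₀) / (π - t₀) with hK
        set η := min (min (δ/2) ((π - t₀)/2)) ((T t₀ - m)/(|K| + 1)) with hη
        have hK1 : (0:ℝ) < |K| + 1 := by positivity
        have hη0 : 0 < η :=
          lt_min (lt_min (by linarith) (by linarith)) (div_pos (by linarith) hK1)
        have hηδ : η ≤ δ/2 := le_trans (min_le_left _ _) (min_le_left _ _)
        have hηt : η ≤ (π - t₀)/2 := le_trans (min_le_left _ _) (min_le_right _ _)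
        have hηK : η ≤ (T t₀ - m)/(|K| + 1) := min_le_right _ _
        refine ⟨t₀ + η, by linarith, by linarith, by linarith, ?_, Or.inl (by linarith)⟩
        have hch := chord_inside t₀ π ht₀Icc ⟨hπ.le, le_refl _⟩ htlt (t₀ + η)
          (by linarith) (by linarith)
        rw [← hK] at hch
        have h2 : -(η * |K|) ≤ η * K := by nlinarith [neg_abs_le K, hη0.le]
        have h3 : η * |K| ≤ (T t₀ - m)/(|K| + 1) * |K| :=
          mul_le_mul_of_nonneg_right hηK (abs_nonneg K)
        have h4 : (T t₀ - m)/(|K| + 1) * |K| < T t₀ - m := by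
          rw [div_mul_eq_mul_div, div_lt_iff₀ hK1]
          nlinarith [abs_nonneg K]
        have hr : (t₀ + η - t₀) * K = η * K := by ring
        linarith
    -- G < min (T c) (T d) on [c, d]
    have hcd : c < d := lt_of_lt_of_le hct htd
    have hGm' : ∀ x : ℝ, c ≤ x → x ≤ d → G x < min (T c) (T d) := by
      intro x h1 h2
      have hx : x ∈ Icc (0:ℝ) π := ⟨by linarith, by linarith⟩
      have hdx : dist x t₀ < δ := by
        rw [Real.dist_eq, abs_lt]
        constructor <;> linarith
      exact lt_min (lt_trans (hGδ x hx hdx) hTc) (lt_trans (hGδ x hx hdx) hTd)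
    -- fhat is constant on (c, d], so μ gives no mass to (a', d]
    set a' := (c + t₀) / 2 with ha'
    have ha1 : c < a' := by rw [ha']; linarith
    have ha2 : a' < t₀ := by rw [ha']; linarith
    have hf1 : fhat a' = (T d - T c) / (d - c) :=
      fconst c d hc0 hcd hdπ hGm' a' ha1 (by linarith)
    have hf2 : fhat d = (T d - T c) / (d - c) :=
      fconst c d hc0 hcd hdπ hGm' d hcd le_rfl
    have hμ0 : μ (Ioc a' d) = 0 := by
      have h := hμ a' d ⟨by linarith, by linarith⟩ ⟨by linarith, hdπ⟩ (by linarith)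
      rw [hf1, hf2, sub_self, ENNReal.ofReal_zero] at h
      exact h
    refine ⟨Ioc a' d, ?_, hμ0⟩
    rw [mem_nhdsWithin]
    rcases hcase with h | h
    · exact ⟨Ioo a' d, isOpen_Ioo, ⟨ha2, h⟩, fun x hx => ⟨hx.1.1, hx.1.2.le⟩⟩
    · refine ⟨Ioi a', isOpen_Ioi, ha2, ?_⟩
      rintro x ⟨hx1, hx2, -⟩
      refine ⟨hx1, ?_⟩
      rw [h]
      exact hx2.2
  have hUz : μ U = 0 := measure_null_of_locally_null U loc
  -- conclude: the integrand vanishes μ-a.e. on [0, π]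
  have hae : (fun t => T t - G t) =ᵐ[μ.restrict (Icc 0 π)] 0 := by
    rw [Filter.EventuallyEq, ae_iff]
    have hsub : {a | ¬(fun t => T t - G t) a = (0 : ℝ → ℝ) a} ⊆ U ∪ (Ioc 0 π)ᶜ := by
      intro a ha
      simp only [mem_setOf_eq, Pi.zero_apply, sub_eq_zero] at ha
      by_cases h : a ∈ Ioc (0:ℝ) π
      · exact Or.inl ⟨h, lt_of_le_of_ne (TG a ⟨h.1.le, h.2⟩) (Ne.symm ha)⟩
      · exact Or.inr h
    have h0 : (μ.restrict (Icc 0 π)) (U ∪ (Ioc 0 π)ᶜ) = 0 := by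
      refine le_antisymm ?_ (zero_le)
      calc (μ.restrict (Icc 0 π)) (U ∪ (Ioc 0 π)ᶜ) ≤ μ (U ∪ (Ioc 0 π)ᶜ) :=
            Measure.le_iff'.mp Measure.restrict_le_self _
        _ ≤ μ U + μ (Ioc 0 π)ᶜ := measure_union_le _ _
        _ = 0 := by rw [hUz, hμsupp, add_zero]
    exact measure_mono_null hsub h0
  exact integral_eq_zero_of_ae hae
end
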